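/- For a positive integer n, y(n) < 0 if and only if either 5 ≤ n ≤ 335, or 338 ≤ n ≤ 350, or 365 ≤ n ≤ 368. -/
import Mathlib

set_option maxRecDepth 100000
set_option maxHeartbeats 1000000
set_option exponentiation.threshold 600

private def S : ℕ → ℕ
  | 0 => 0
  | n+1 => if (S n + 1) * (S n + 1) ≤ n+1 then S n + 1 else S n

private lemma S_le : ∀ n, S n * S n ≤ n := by
  intro n
  induction n with
  | zero => simp [S]
  | succ k ih =>
    rw [S]
    split
    · omega
    · omega

private lemma lt_S : ∀ n, n < (S n + 1) * (S n + 1) := by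
  intro n
  induction n with
  | zero => simp [S]
  | succ k ih =>
    rw [S]
    split
    · nlinarith
    · omega

private def A (n : ℕ) : ℕ := 2*n + 2 - 2*((2*n-1)/3) - S (2*n)
private def B (n : ℕ) : ℕ := S (2*n) - 1

private lemma small : ∀ n < 513, 1 ≤ n →
    (2 ^ A n < n ^ B n ↔ (5 ≤ n ∧ n ≤ 335) ∨ (338 ≤ n ∧ n ≤ 350) ∨ (365 ≤ n ∧ n ≤ 368)) := by
  decide

private lemma pow_r : ∀ k, 11 ≤ k → (3*k+4)*(3*k+4) ≤ 2^k := by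
  intro k hk
  induction k, hk using Nat.le_induction with
  | base => decide
  | succ n hn ih =>
    have : 2^(n+1) = 2 * 2^n := by ring
    nlinarith

theorem stmt
    (z : ℕ → ℤ) (m r : ℕ → ℕ) (c x : ℕ → ℤ) (y : ℕ → ℚ)
    (hz : ∀ n : ℕ, 1 ≤ n → 3 * z n < 2 * (n : ℤ) ∧ ∀ w : ℤ, 3 * w < 2 * (n : ℤ) → w ≤ z n)
    (hm : ∀ n : ℕ, 1 ≤ n → (m n : ℤ) ^ 2 ≤ 2 * (n : ℤ) ∧ ∀ w : ℕ, (w : ℤ) ^ 2 ≤ 2 * (n : ℤ) → w ≤ m n)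
    (hr : ∀ n : ℕ, 1 ≤ n → n ≤ 2 ^ r n ∧ ∀ s : ℕ, n ≤ 2 ^ s → r n ≤ s)
    (hc : ∀ n : ℕ, c n = 2 * (n : ℤ) - 2 * z n + 2)
    (hx : ∀ n : ℕ, x n = z n - ((r n : ℤ) + 1) * (m n : ℤ))
    (hy : ∀ n : ℕ, y n = (2 : ℚ) ^ (c n - (m n : ℤ)) - (n : ℚ) ^ ((m n : ℤ) - 1)) :
    ∀ n : ℕ, 1 ≤ n →
      (y n < 0 ↔ (5 ≤ n ∧ n ≤ 335) ∨ (338 ≤ n ∧ n ≤ 350) ∨ (365 ≤ n ∧ n ≤ 368)) := by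
  intro n hn
  obtain ⟨hz1, hz2⟩ := hz n hn
  obtain ⟨hm1, hm2⟩ := hm n hn
  obtain ⟨hr1, hr2⟩ := hr n hn
  -- z upper characterization
  have hz3 : 2*(n:ℤ) ≤ 3 * z n + 3 := by
    by_contra h
    push_neg at h
    have := hz2 (z n + 1) (by omega)
    omega
  have hzv : z n = ((2*n-1)/3 : ℕ) := by omega
  -- m facts
  have hm1' : m n * m n ≤ 2*n := by
    have h := hm1
    rw [sq] at h
    exact_mod_cast h
  have hm3 : 2*n < (m n + 1) * (m n + 1) := by
    by_contra h
    push_neg at h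
    have h2 : ((m n + 1 : ℕ):ℤ)^2 ≤ 2*(n:ℤ) := by
      push_cast
      push_cast at h
      nlinarith
    have := hm2 _ h2
    omega
  have hm0 : 1 ≤ m n := by
    have := hm2 1 (by push_cast; omega)
    omega
  have hms : m n = S (2*n) := by
    have h1 := S_le (2*n)
    have h2 := lt_S (2*n)
    have hle : m n ≤ S (2*n) := by
      by_contra h
      push_neg at h
      have : (S (2*n)+1)*(S (2*n)+1) ≤ m n * m n := Nat.mul_le_mul h h
      omega
    have hge : S (2*n) ≤ m n := by
      apply hm2
      have := S_le (2*n)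
      push_cast
      nlinarith
    omega
  -- nonnegativity of exponent
  have hcm : (0:ℤ) ≤ c n - (m n : ℤ) := by
    rw [hc]
    nlinarith [hm1, hz1, sq_nonneg ((m n : ℤ) - 2), Int.ofNat_nonneg n]
  have hA : ((A n : ℕ) : ℤ) = c n - (m n : ℤ) := by
    rw [hc] at hcm ⊢
    rw [hzv] at hcm ⊢
    simp only [A, ← hms]
    omega
  have hBe : B n = m n - 1 := by simp only [B, ← hms]
  have hB : ((B n : ℕ) : ℤ) = (m n : ℤ) - 1 := by
    rw [hBe]
    omega
  have hyy : y n = ((2 ^ A n : ℕ) : ℚ) - ((n ^ B n : ℕ) : ℚ) := by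
    rw [hy n, ← hA, ← hB, zpow_natCast, zpow_natCast]
    push_cast
    ring
  have hiff : y n < 0 ↔ 2 ^ A n < n ^ B n := by
    rw [hyy, sub_neg]
    exact Nat.cast_lt
  rw [hiff]
  by_cases hsm : n ≤ 512
  · exact small n (by omega) hn
  · push_neg at hsm
    -- large case: show y ≥ 0
    have hrpos : 1 ≤ r n := by
      rcases Nat.eq_zero_or_pos (r n) with h | h
      · rw [h] at hr1; simp at hr1; omega
      · exact h
    have hr4 : 2 ^ (r n - 1) < n := by
      by_contra h
      push_neg at h
      have := hr2 _ h
      omega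
    have h2r : 2 ^ r n < 2 * n := by
      have he : 2 ^ r n = 2 * 2 ^ (r n - 1) := by
        rw [← pow_succ']
        congr 1
        omega
      omega
    obtain ⟨M1, hM1⟩ : ∃ M1, m n = M1 + 1 := ⟨m n - 1, by omega⟩
    have key : 3 * (r n * (m n - 1)) + 3 * m n ≤ 2*n + 8 := by
      rw [hM1]
      simp only [Nat.add_sub_cancel]
      rw [hM1] at hm1' hm3
      by_cases hr10 : r n ≤ 10
      · have hm32 : 31 ≤ M1 := by nlinarith
        have h1 : r n * M1 ≤ 10 * M1 := Nat.mul_le_mul_right M1 hr10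
        have h2 : 31 * M1 ≤ M1 * M1 := Nat.mul_le_mul_right M1 hm32
        nlinarith
      · have hp := pow_r (r n) (by omega)
        have hmr : 3 * r n + 4 ≤ M1 + 1 := by
          by_contra h
          push_neg at h
          have : (M1+1+1)*(M1+1+1) ≤ (3*r n+4)*(3*r n +4) := Nat.mul_le_mul (by omega) (by omega)
          omega
        have h1 : (3 * r n + 3) * M1 ≤ M1 * M1 := Nat.mul_le_mul_right M1 (by omega)
        nlinarith
    have key' : (3:ℤ) * ((r n : ℤ) * (B n : ℤ)) + 3 * (m n : ℤ) ≤ 2*(n:ℤ) + 8 := by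
      rw [← hBe] at key
      exact_mod_cast key
    have h6 : 6 * z n ≤ 4*(n:ℤ) - 2 := by omega
    have hAA : r n * B n ≤ A n := by
      have hAi : ((r n : ℤ) * (B n : ℤ)) ≤ (A n : ℤ) := by
        rw [hA, hc]
        linarith
      exact_mod_cast hAi
    have hge : n ^ B n ≤ 2 ^ A n :=
      calc n ^ B n ≤ (2 ^ r n) ^ B n := Nat.pow_le_pow_left hr1 _
        _ = 2 ^ (r n * B n) := (pow_mul 2 (r n) (B n)).symm
        _ ≤ 2 ^ A n := Nat.pow_le_pow_right (by norm_num) hAA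
    constructor
    · intro h
      exact absurd h (not_lt.2 hge)
    · intro h
      exact absurd h (by omega)
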